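/- Let w = exp(−Q) ∈ ℱ(C²+). Let f : ℝ → ℝ have bounded variation on every compact interval with ∫_ℝ w(x)|df(x)| < ∞ (the integral of w against the total-variation measure of f), and set g(x) := f(x) − f(0). Then ∫_ℝ |Q′(x) w(x) g(x)| dx ≤ ∫_ℝ w(x) |df(x)|. -/

import Mathlib

open MeasureTheory Filter Set
open scoped ENNReal

noncomputable section

/-- The function `T(x) = x Q'(x) / Q(x)`. -/
def Tf (Q : ℝ → ℝ) (x : ℝ) : ℝ := x * deriv Q x / Q x

/-- The weight `w = exp (-Q)`. -/
def wgt (Q : ℝ → ℝ) (x : ℝ) : ℝ := Real.exp (-Q x)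

/-- The class `F(C²+)` of Levin and Lubinsky, described via the exponent `Q`. -/
structure FC2 (Q : ℝ → ℝ) : Prop where
  nonneg : ∀ x, 0 ≤ Q x
  even : ∀ x, Q (-x) = Q x
  cont : Continuous Q
  zeroAtZero : Q 0 = 0
  diff : Differentiable ℝ Q
  derivCont : Continuous (deriv Q)
  deriv2 : ∀ x : ℝ, x ≠ 0 → DifferentiableAt ℝ (deriv Q) x
  deriv2_pos : ∀ x : ℝ, x ≠ 0 → 0 < deriv (deriv Q) x
  tendsto_top : Tendsto Q atTop atTop
  quasi_incr : ∃ C > 0, ∀ x y : ℝ, 0 < x → x < y → Tf Q x ≤ C * Tf Q y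
  T_lower : ∃ Λ > 1, ∀ x : ℝ, x ≠ 0 → Λ ≤ Tf Q x
  ratio_upper : ∃ C₁ > 0, ∀ᵐ x : ℝ ∂volume,
      deriv (deriv Q) x / |deriv Q x| ≤ C₁ * (|deriv Q x| / Q x)
  ratio_lower : ∃ C₂ > 0, ∃ K > 0, ∀ᵐ x : ℝ ∂volume,
      K ≤ |x| → C₂ * (|deriv Q x| / Q x) ≤ deriv (deriv Q) x / |deriv Q x|

/-- The class `F_λ(C^m+)`; for `m ≤ 2` it coincides with `F(C²+)`. -/
def FlamC (m : ℕ) (lam : ℝ) (Q : ℝ → ℝ) : Prop :=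
  FC2 Q ∧ (m ≤ 2 ∨
    (ContDiffOn ℝ (m : ℕ∞) Q {(0 : ℝ)}ᶜ ∧
      ∃ C > 1, ∃ K ≥ (1 : ℝ), ∀ x : ℝ, K ≤ |x| →
        (|deriv Q x| ≤ C * Q x ^ lam) ∧
        (∀ k : ℕ, 2 ≤ k → k + 2 ≤ m →
          |iteratedDeriv 2 Q x / deriv Q x| ≤
            C * |iteratedDeriv (k+1) Q x / iteratedDeriv k Q x| ∧
          |iteratedDeriv (k+1) Q x / iteratedDeriv k Q x| ≤
            C * |iteratedDeriv 2 Q x / deriv Q x|) ∧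
        |iteratedDeriv m Q x / iteratedDeriv (m-1) Q x| ≤
          C * |iteratedDeriv (m-1) Q x / iteratedDeriv (m-2) Q x|))

/-- `a` is the Mhaskar–Rakhmanov–Saff number `a_u` for the exponent `Q`. -/
def IsMRS (Q : ℝ → ℝ) (u a : ℝ) : Prop :=
  0 < a ∧ u = (2 / Real.pi) * ∫ s in (0:ℝ)..(1:ℝ), a * s * deriv Q (a * s) / Real.sqrt (1 - s ^ 2)

/-- The (weighted) sup norm over `ℝ`. -/
def supN (g : ℝ → ℝ) : ℝ := ⨆ x : ℝ, |g x|

/-- `E_n(v; f)`: the error of best weighted uniform approximation by polynomials of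
degree at most `n`. -/
def Eerr (n : ℕ) (v f : ℝ → ℝ) : ℝ :=
  ⨅ P : {P : Polynomial ℝ // P.natDegree ≤ n}, supN fun x => (f x - P.1.eval x) * v x

/-- `E_{p,n}(v; f)`: the error of best weighted `L_p` approximation by polynomials of
degree at most `n`. -/
def EerrLp (p : ℝ≥0∞) (n : ℕ) (v f : ℝ → ℝ) : ℝ≥0∞ :=
  ⨅ P : {P : Polynomial ℝ // P.natDegree ≤ n},
    eLpNorm (fun x => (f x - P.1.eval x) * v x) p volume

/-- `σ(t) = inf { a_u : a_u / u ≤ t }`. -/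
def sigmaT (Q : ℝ → ℝ) (t : ℝ) : ℝ :=
  sInf {a : ℝ | ∃ u : ℝ, 0 < u ∧ IsMRS Q u a ∧ a / u ≤ t}

/-- `Φ_t(x) = √|1 - |x|/σ(t)| + T(σ(t))^{-1/2}`. -/
def PhiT (Q : ℝ → ℝ) (t x : ℝ) : ℝ :=
  Real.sqrt |1 - |x| / sigmaT Q t| + Tf Q (sigmaT Q t) ^ (-(1:ℝ)/2)

end


section Aux
open MeasureTheory Filter Set Topology
open scoped ENNReal

variable {Q : ℝ → ℝ}

lemma FC2.wgt_cont (hw : FC2 Q) : Continuous (wgt Q) := hw.cont.neg.rexp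

lemma FC2.wgt_nonneg (hw : FC2 Q) (x : ℝ) : 0 ≤ wgt Q x := (Real.exp_pos _).le

lemma FC2.deriv_neg_eq (hw : FC2 Q) (x : ℝ) : deriv Q (-x) = - deriv Q x := by
  have h1 : HasDerivAt (Q ∘ (fun y : ℝ => -y)) (deriv Q (-x) * (-1)) x :=
    (hw.diff (-x)).hasDerivAt.comp x (hasDerivAt_neg x)
  have h2 : Q ∘ (fun y : ℝ => -y) = Q := funext hw.even
  rw [h2] at h1
  have h3 := h1.deriv
  linarith

lemma FC2.derivQ_zero (hw : FC2 Q) : deriv Q 0 = 0 := by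
  have := hw.deriv_neg_eq 0
  simp at this
  linarith

lemma FC2.derivQ_pos (hw : FC2 Q) {x : ℝ} (hx : 0 < x) : 0 < deriv Q x := by
  have hmono : StrictMonoOn (deriv Q) (Ici (0:ℝ)) := by
    apply strictMonoOn_of_deriv_pos (convex_Ici 0) hw.derivCont.continuousOn
    intro y hy
    rw [interior_Ici] at hy
    exact hw.deriv2_pos y (ne_of_gt hy)
  have := hmono self_mem_Ici (le_of_lt hx) hx
  rwa [hw.derivQ_zero] at this

lemma FC2.wgt_tendsto (hw : FC2 Q) : Tendsto (wgt Q) atTop (𝓝 0) := by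
  have h1 : Tendsto (fun x => -Q x) atTop atBot := tendsto_neg_atBot_iff.2 hw.tendsto_top
  exact Real.tendsto_exp_atBot.comp h1

lemma FC2.lint_Ioi (hw : FC2 Q) {t : ℝ} (ht : 0 ≤ t) :
    ∫⁻ x in Ioi t, ENNReal.ofReal (|deriv Q x| * wgt Q x) = ENNReal.ofReal (wgt Q t) := by
  set g' : ℝ → ℝ := fun x => deriv Q x * Real.exp (-Q x) with hg'
  have hderiv : ∀ x ∈ Ici t, HasDerivAt (fun y => -Real.exp (-Q y)) (g' x) x := by
    intro x _
    have h1 : HasDerivAt (fun y : ℝ => -Q y) (-(deriv Q x)) x := (hw.diff x).hasDerivAt.neg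
    have h2 := (Real.hasDerivAt_exp (-Q x)).comp x h1
    have h3 := h2.neg
    rw [show g' x = -(Real.exp (-Q x) * -deriv Q x) by rw [hg']; ring]
    exact h3
  have hpos : ∀ x ∈ Ioi t, 0 ≤ g' x := fun x hx =>
    mul_nonneg (hw.derivQ_pos (lt_of_le_of_lt ht hx)).le (Real.exp_pos _).le
  have htend : Tendsto (fun y => -Real.exp (-Q y)) atTop (𝓝 (0:ℝ)) := by
    simpa [wgt] using hw.wgt_tendsto.neg
  have hint : IntegrableOn g' (Ioi t) := integrableOn_Ioi_deriv_of_nonneg' hderiv hpos htend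
  have heq : ∫ x in Ioi t, g' x = Real.exp (-Q t) := by
    rw [integral_Ioi_of_hasDerivAt_of_nonneg' hderiv hpos htend]
    ring
  have hl : ∫⁻ x in Ioi t, ENNReal.ofReal (g' x) = ENNReal.ofReal (wgt Q t) := by
    rw [← ofReal_integral_eq_lintegral_ofReal hint
      ((ae_restrict_iff' measurableSet_Ioi).2 (Filter.Eventually.of_forall hpos))]
    rw [heq]; rfl
  rw [← hl]
  apply setLIntegral_congr_fun measurableSet_Ioi
  intro x hx
  have : 0 < deriv Q x := hw.derivQ_pos (lt_of_le_of_lt ht hx)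
  beta_reduce
  rw [abs_of_pos this]
  rfl

lemma FC2.lint_Iio (hw : FC2 Q) {t : ℝ} (ht : t ≤ 0) :
    ∫⁻ x in Iio t, ENNReal.ofReal (|deriv Q x| * wgt Q x) = ENNReal.ofReal (wgt Q t) := by
  have hmp : MeasurePreserving (Neg.neg : ℝ → ℝ) volume volume :=
    Measure.measurePreserving_neg _
  have hemb : MeasurableEmbedding (Neg.neg : ℝ → ℝ) := measurableEmbedding_neg
  have hkey := hmp.setLIntegral_comp_preimage_emb hemb
    (fun x => ENNReal.ofReal (|deriv Q x| * wgt Q x)) (Iio t)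
  have hpre : (Neg.neg : ℝ → ℝ) ⁻¹' (Iio t) = Ioi (-t) := by
    ext x; simp [lt_neg]
  rw [hpre] at hkey
  rw [← hkey]
  have heq : ∀ x : ℝ, |deriv Q (-x)| * wgt Q (-x) = |deriv Q x| * wgt Q x := by
    intro x
    rw [hw.deriv_neg_eq, abs_neg]
    unfold wgt
    rw [hw.even]
  calc ∫⁻ x in Ioi (-t), ENNReal.ofReal (|deriv Q (-x)| * wgt Q (-x))
      = ∫⁻ x in Ioi (-t), ENNReal.ofReal (|deriv Q x| * wgt Q x) := by
        apply lintegral_congr; intro x; rw [heq]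
    _ = ENNReal.ofReal (wgt Q (-t)) := hw.lint_Ioi (by linarith)
    _ = ENNReal.ofReal (wgt Q t) := by unfold wgt; rw [hw.even]

end Aux

open MeasureTheory Filter Set in
/-- The estimate `‖Q' w (f - f(0))‖_{L₁(ℝ)} ≤ ∫ w |df|` from the proof of Theorem 3.4. -/
theorem stmt_9 (Q : ℝ → ℝ) (hw : FC2 Q) (f : ℝ → ℝ) (ν : Measure ℝ)
    (hBV : ∀ a b : ℝ, a ≤ b → BoundedVariationOn f (Set.Icc a b))
    (hν : ∀ a b : ℝ, a ≤ b → ν (Set.Icc a b) = eVariationOn f (Set.Icc a b))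
    (hfin : (∫⁻ x, ENNReal.ofReal (wgt Q x) ∂ν) ≠ ⊤) :
    ∫ x : ℝ, |deriv Q x * wgt Q x * (f x - f 0)|
      ≤ (∫⁻ x, ENNReal.ofReal (wgt Q x) ∂ν).toReal := by
  classical
  -- notation
  set φ : ℝ → ℝ := fun x => |deriv Q x| * wgt Q x with hφdef
  have hφcont : Continuous φ := hw.derivCont.abs.mul hw.wgt_cont
  have hφnn : ∀ x, 0 ≤ φ x := fun x => mul_nonneg (abs_nonneg _) (hw.wgt_nonneg x)
  -- f is measurable
  have hlbv : LocallyBoundedVariationOn f univ := by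
    intro a b _ _
    unfold BoundedVariationOn
    rw [Set.univ_inter]
    exact ne_top_of_le_ne_top (hBV (min a b) (max a b) min_le_max)
      (eVariationOn.mono f (Set.Icc_subset_Icc (min_le_left a b) (le_max_right a b)))
  have hlbv2 : LocallyBoundedVariationOn f univ := hlbv
  obtain ⟨p, q, hp, hq, hpq⟩ := hlbv.exists_monotoneOn_sub_monotoneOn
  have hfm : Measurable f := by
    rw [hpq]
    exact ((monotoneOn_univ.1 hp).measurable).sub ((monotoneOn_univ.1 hq).measurable)
  -- ν is sigma-finite
  have hsf : SigmaFinite ν := by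
    apply MeasureTheory.Measure.sigmaFinite_of_countable
      (Set.countable_range (fun n : ℕ => Set.Icc (-(n:ℝ)) n))
    · rintro s ⟨n, rfl⟩
      rw [hν _ _ (neg_le_self (Nat.cast_nonneg n))]
      exact Ne.lt_top (hBV _ _ (neg_le_self (Nat.cast_nonneg n)))
    · rw [Set.sUnion_range]
      ext x
      simp only [Set.mem_iUnion, Set.mem_Icc, Set.mem_univ, iff_true]
      obtain ⟨n, hn⟩ := exists_nat_ge |x|
      exact ⟨n, neg_le_of_abs_le hn, le_of_abs_le hn⟩
  -- ν {0} = 0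
  have hzero : ν {(0:ℝ)} = 0 := by
    have h1 : ν (Set.Icc (-1:ℝ) 0) + ν (Set.Icc (0:ℝ) 1) = ν (Set.Icc (-1:ℝ) 1) := by
      rw [hν _ _ (by norm_num), hν _ _ (by norm_num), hν _ _ (by norm_num)]
      have := eVariationOn.Icc_add_Icc f (by norm_num : (-1:ℝ) ≤ 0)
        (by norm_num : (0:ℝ) ≤ 1) (Set.mem_univ (0:ℝ))
      simpa using this
    have h2 : ν (Set.Icc (-1:ℝ) 0 ∪ Set.Icc 0 1) + ν (Set.Icc (-1:ℝ) 0 ∩ Set.Icc 0 1)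
        = ν (Set.Icc (-1:ℝ) 0) + ν (Set.Icc 0 1) :=
      measure_union_add_inter _ measurableSet_Icc
    rw [Set.Icc_union_Icc_eq_Icc (by norm_num) (by norm_num)] at h2
    have h3 : Set.Icc (-1:ℝ) 0 ∩ Set.Icc 0 1 = {(0:ℝ)} := by
      rw [Set.Icc_inter_Icc]
      norm_num
    rw [h3, h1] at h2
    have hfin' : ν (Set.Icc (-1:ℝ) 1) ≠ ⊤ := by
      rw [hν _ _ (by norm_num)]
      exact hBV _ _ (by norm_num)
    nth_rewrite 2 [← add_zero (ν (Set.Icc (-1:ℝ) 1))] at h2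
    exact (ENNReal.add_right_inj hfin').1 h2
  -- pointwise bound
  have key : ∀ x : ℝ, ENNReal.ofReal |deriv Q x * wgt Q x * (f x - f 0)|
      ≤ ENNReal.ofReal (φ x) * ν (Set.Icc (min 0 x) (max 0 x)) := by
    intro x
    have hsub : ENNReal.ofReal |f x - f 0| ≤ ν (Set.Icc (min 0 x) (max 0 x)) := by
      rw [hν _ _ min_le_max]
      have := eVariationOn.edist_le f
        (Set.mem_Icc.2 ⟨min_le_right 0 x, le_max_right 0 x⟩)
        (Set.mem_Icc.2 ⟨min_le_left 0 x, le_max_left 0 x⟩)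
      rwa [edist_dist, Real.dist_eq] at this
    have habs : |deriv Q x * wgt Q x * (f x - f 0)| = φ x * |f x - f 0| := by
      rw [abs_mul, abs_mul, abs_of_nonneg (hw.wgt_nonneg x)]
    rw [habs, ENNReal.ofReal_mul (hφnn x)]
    exact mul_le_mul_right hsub _
  -- the product kernel
  set S : Set (ℝ × ℝ) := {p : ℝ × ℝ | min 0 p.1 ≤ p.2 ∧ p.2 ≤ max 0 p.1} with hSdef
  have hSmeas : MeasurableSet S := by
    apply MeasurableSet.inter
    · exact measurableSet_le ((continuous_const.min continuous_fst).measurable)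
        measurable_snd
    · exact measurableSet_le measurable_snd
        ((continuous_const.max continuous_fst).measurable)
  set F : ℝ → ℝ → ℝ≥0∞ :=
    fun x t => ENNReal.ofReal (φ x) * S.indicator (1 : ℝ × ℝ → ℝ≥0∞) (x, t) with hFdef
  have hFmeas : Measurable (Function.uncurry F) := by
    apply Measurable.mul
    · exact ENNReal.measurable_ofReal.comp (hφcont.measurable.comp measurable_fst)
    · exact measurable_const.indicator hSmeas
  -- step 1 : rewrite ν (Icc ...) as inner integral
  have step1 : ∀ x : ℝ,
      ENNReal.ofReal (φ x) * ν (Set.Icc (min 0 x) (max 0 x)) = ∫⁻ t, F x t ∂ν := by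
    intro x
    have hind : ∀ t : ℝ, S.indicator (1 : ℝ × ℝ → ℝ≥0∞) (x, t)
        = (Set.Icc (min 0 x) (max 0 x)).indicator (1 : ℝ → ℝ≥0∞) t := by
      intro t
      simp only [Set.indicator, hSdef, Set.mem_setOf_eq, Set.mem_Icc, Pi.one_apply]
    simp only [hFdef]
    rw [lintegral_const_mul' _ _ ENNReal.ofReal_ne_top]
    congr 1
    calc ν (Set.Icc (min 0 x) (max 0 x))
        = ∫⁻ t, (Set.Icc (min 0 x) (max 0 x)).indicator (1 : ℝ → ℝ≥0∞) t ∂ν := by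
          rw [lintegral_indicator_one measurableSet_Icc]
      _ = ∫⁻ t, S.indicator (1 : ℝ × ℝ → ℝ≥0∞) (x, t) ∂ν := by
          apply lintegral_congr
          intro t
          rw [hind]
  -- step 2 : for t ≠ 0, the x-integral is at most ofReal (wgt Q t)
  have step2 : ∀ t : ℝ, t ≠ 0 → (∫⁻ x, F x t) ≤ ENNReal.ofReal (wgt Q t) := by
    intro t ht
    have hrw : ∀ x : ℝ, F x t
        = ({x : ℝ | min 0 x ≤ t ∧ t ≤ max 0 x}).indicator
            (fun x => ENNReal.ofReal (φ x)) x := by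
      intro x
      simp only [hFdef, hSdef, Set.indicator, Set.mem_setOf_eq, Pi.one_apply]
      by_cases h : min 0 x ≤ t ∧ t ≤ max 0 x
      · simp [h]
      · simp [h]
    have hAmeas : MeasurableSet {x : ℝ | min 0 x ≤ t ∧ t ≤ max 0 x} := by
      apply MeasurableSet.inter
      · exact measurableSet_le ((continuous_const.min continuous_id).measurable)
          measurable_const
      · exact measurableSet_le measurable_const
          ((continuous_const.max continuous_id).measurable)
    calc (∫⁻ x, F x t)
        = ∫⁻ x in {x : ℝ | min 0 x ≤ t ∧ t ≤ max 0 x}, ENNReal.ofReal (φ x) := by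
          rw [← lintegral_indicator hAmeas]
          exact lintegral_congr hrw
      _ ≤ ENNReal.ofReal (wgt Q t) := by
          rcases lt_or_gt_of_ne ht with hlt | hgt
          · have hset : {x : ℝ | min 0 x ≤ t ∧ t ≤ max 0 x} = Set.Iic t := by
              ext x
              simp only [Set.mem_setOf_eq, Set.mem_Iic, min_le_iff, le_max_iff]
              constructor
              · rintro ⟨h1 | h1, _⟩
                · linarith
                · exact h1
              · intro h
                exact ⟨Or.inr h, Or.inl hlt.le⟩
            rw [hset, ← setLIntegral_congr Iio_ae_eq_Iic]
            rw [hw.lint_Iio hlt.le]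
          · have hset : {x : ℝ | min 0 x ≤ t ∧ t ≤ max 0 x} = Set.Ici t := by
              ext x
              simp only [Set.mem_setOf_eq, Set.mem_Ici, min_le_iff, le_max_iff]
              constructor
              · rintro ⟨_, h2 | h2⟩
                · linarith
                · exact h2
              · intro h
                exact ⟨Or.inl hgt.le, Or.inr h⟩
            rw [hset, ← setLIntegral_congr Ioi_ae_eq_Ici]
            rw [hw.lint_Ioi hgt.le]
  -- put everything together in ℝ≥0∞
  have main : (∫⁻ x, ENNReal.ofReal |deriv Q x * wgt Q x * (f x - f 0)|)
      ≤ ∫⁻ t, ENNReal.ofReal (wgt Q t) ∂ν := by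
    calc (∫⁻ x, ENNReal.ofReal |deriv Q x * wgt Q x * (f x - f 0)|)
        ≤ ∫⁻ x, ENNReal.ofReal (φ x) * ν (Set.Icc (min 0 x) (max 0 x)) :=
          lintegral_mono key
      _ = ∫⁻ x, ∫⁻ t, F x t ∂ν := lintegral_congr step1
      _ = ∫⁻ t, (∫⁻ x, F x t) ∂ν := lintegral_lintegral_swap hFmeas.aemeasurable
      _ ≤ ∫⁻ t, ENNReal.ofReal (wgt Q t) ∂ν := by
          apply lintegral_mono_ae
          have hne : ∀ᵐ t ∂ν, t ≠ 0 := by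
            rw [ae_iff]
            simpa using hzero
          filter_upwards [hne] with t ht
          exact step2 t ht
  -- convert the Bochner integral to a lintegral
  have hmeas : AEStronglyMeasurable (fun x => |deriv Q x * wgt Q x * (f x - f 0)|) volume :=
    (((hw.derivCont.measurable.mul hw.wgt_cont.measurable).mul
      (hfm.sub measurable_const)).abs).aestronglyMeasurable
  rw [MeasureTheory.integral_eq_lintegral_of_nonneg_ae
    (Filter.Eventually.of_forall (fun x => abs_nonneg _)) hmeas]
  exact ENNReal.toReal_mono hfin main
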